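/- arXiv:2107.11819 — 3 statements merged into one kernel-verified Lean document; each statement's English description precedes it below -/
import Mathlib

section
/- Let d ≥ 1 and K > 0. There is a constant C = C(d,K) such that for all 0 < ε ≤ 1/2, all t with 0 < t ≤ 1, all γ ∈ ℝ and all ξ̃ ∈ ℝ^d with |ξ̃| ≤ K ε^{−1}, one has ∫_{|ξ| ≤ K ε^{−1}} dξ / |γ + ξ̃·ξ + i/t| ≤ C ε^{1−d} · min(1/|ξ̃|, t/ε) · (1 + |log ε|). -/
open MeasureTheory Classical Real
open intervalIntegral


lemma aux_pos (b A B : ℝ) (hb : 0 < b) (hA : 0 ≤ A) (hAB : A ≤ B) :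
    ∫ u in A..B, 1/(|u|+b) ≤ Real.log (1 + (B-A)/b) := by
  have h1 : (∫ u in A..B, 1/(|u|+b)) = ∫ u in A..B, 1/(u+b) := by
    apply intervalIntegral.integral_congr
    intro u hu
    rw [Set.uIcc_of_le hAB] at hu
    show (1:ℝ)/(|u|+b) = 1/(u+b)
    rw [abs_of_nonneg (le_trans hA hu.1)]
  have h2 : (∫ u in A..B, 1/(u+b)) = ∫ u in (A+b)..(B+b), 1/u :=
    intervalIntegral.integral_comp_add_right (fun u => 1/u) b
  have h0 : (0:ℝ) ∉ Set.uIcc (A+b) (B+b) := by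
    rw [Set.uIcc_of_le (by linarith)]
    intro h
    have := h.1
    linarith
  rw [h1, h2, integral_one_div h0]
  apply Real.log_le_log (div_pos (by linarith) (by linarith))
  rw [div_le_iff₀ (by linarith)]
  have hb2 : 0 < b := hb
  nlinarith [div_mul_cancel₀ (B-A) hb.ne', mul_nonneg (div_nonneg (sub_nonneg.2 hAB) hb.le) hA]

lemma aux_abs (b A B : ℝ) (hb : 0 < b) (hAB : A ≤ B) :
    ∫ u in A..B, 1/(|u|+b) ≤ 2 * Real.log (1 + (B-A)/b) := by
  have hcont : Continuous fun u : ℝ => 1/(|u|+b) :=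
    continuous_const.div (continuous_abs.add continuous_const) (fun u => by positivity)
  have hlog0 : 0 ≤ Real.log (1 + (B-A)/b) :=
    Real.log_nonneg (by nlinarith [div_nonneg (sub_nonneg.2 hAB) hb.le])
  have hmono : ∀ x : ℝ, 0 ≤ x → x ≤ B - A →
      Real.log (1 + x/b) ≤ Real.log (1 + (B-A)/b) := by
    intro x hx hxB
    apply Real.log_le_log (by positivity)
    gcongr
  have hflip : ∀ A' B' : ℝ, (∫ u in A'..B', 1/(|u|+b)) = ∫ u in -B'..-A', 1/(|u|+b) := by
    intro A' B'
    rw [← intervalIntegral.integral_comp_neg (fun u => 1/(|u|+b))]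
    simp [abs_neg]
  rcases le_or_gt 0 A with h0 | h0
  · linarith [aux_pos b A B hb h0 hAB]
  rcases le_or_gt B 0 with h1 | h1
  · have h2 := aux_pos b (-B) (-A) hb (by linarith) (by linarith)
    rw [hflip]
    have e : -A - -B = B - A := by ring
    rw [e] at h2
    linarith
  · have hi1 : IntervalIntegrable (fun u : ℝ => 1/(|u|+b)) volume A 0 :=
      hcont.intervalIntegrable _ _
    have hi2 : IntervalIntegrable (fun u : ℝ => 1/(|u|+b)) volume 0 B :=
      hcont.intervalIntegrable _ _
    have hsplit := intervalIntegral.integral_add_adjacent_intervals hi1 hi2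
    have p2 := aux_pos b 0 B hb le_rfl h1.le
    have p1 := aux_pos b (-0) (-A) hb (by norm_num) (by linarith)
    have q1 : (∫ u in A..0, 1/(|u|+b)) ≤ Real.log (1 + (-A - -0)/b) :=
      (hflip A 0) ▸ p1
    have m2 := hmono (B - 0) (by linarith) (by linarith)
    have m1 := hmono (-A - -0) (by linarith) (by linarith)
    rw [← hsplit]
    linarith

lemma oneD (a b R γ : ℝ) (ha : 0 < a) (hb : 0 < b) (hR : 0 ≤ R) :
    ∫ s in -R..R, 1/Real.sqrt ((γ + s*a)^2 + b^2) ≤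
      (4/a) * Real.log (1 + 2*R*a/b) := by
  have hpt : ∀ s : ℝ, 1/Real.sqrt ((γ + s*a)^2 + b^2) ≤ 2 * (1/(|a*s+γ|+b)) := by
    intro s
    have h1 : (|a*s+γ|+b)/2 ≤ Real.sqrt ((γ + s*a)^2 + b^2) := by
      have hx : |a*s+γ| ≤ Real.sqrt ((γ + s*a)^2 + b^2) := by
        rw [← Real.sqrt_sq_eq_abs]
        apply Real.sqrt_le_sqrt
        nlinarith [sq_nonneg b]
      have hbb : b ≤ Real.sqrt ((γ + s*a)^2 + b^2) := by
        conv_lhs => rw [← Real.sqrt_sq hb.le]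
        apply Real.sqrt_le_sqrt
        nlinarith [sq_nonneg (γ + s*a)]
      linarith
    have hs : 0 < Real.sqrt ((γ + s*a)^2 + b^2) := Real.sqrt_pos.2 (by positivity)
    rw [mul_one_div, div_le_div_iff₀ hs (by positivity)]
    linarith
  have hinner : Continuous fun s : ℝ => (γ + s*a)^2 + b^2 := by fun_prop
  have hcont1 : Continuous fun s : ℝ => 1/Real.sqrt ((γ + s*a)^2 + b^2) :=
    continuous_const.div (Real.continuous_sqrt.comp hinner)
      (fun s => (Real.sqrt_pos.2 (by positivity)).ne')
  have hcont2 : Continuous fun s : ℝ => 2 * (1/(|a*s+γ|+b)) := by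
    apply continuous_const.mul
    exact continuous_const.div
      ((continuous_abs.comp (by fun_prop : Continuous fun s : ℝ => a*s+γ)).add continuous_const)
      (fun s => by positivity)
  have step1 : (∫ s in -R..R, 1/Real.sqrt ((γ + s*a)^2 + b^2)) ≤
      ∫ s in -R..R, 2 * (1/(|a*s+γ|+b)) :=
    intervalIntegral.integral_mono_on (by linarith) (hcont1.intervalIntegrable _ _)
      (hcont2.intervalIntegrable _ _) (fun x _ => hpt x)
  have step2 : (∫ s in -R..R, 2 * (1/(|a*s+γ|+b))) =
      2 * ∫ s in -R..R, (fun u => 1/(|u|+b)) (a*s+γ) :=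
    (intervalIntegral.integral_const_mul 2 _)
  have step3 : (∫ s in -R..R, (fun u => 1/(|u|+b)) (a*s+γ)) =
      a⁻¹ • ∫ u in (a*(-R)+γ)..(a*R+γ), 1/(|u|+b) :=
    intervalIntegral.integral_comp_mul_add (fun u => 1/(|u|+b)) ha.ne' γ
  have step4 := aux_abs b (a*(-R)+γ) (a*R+γ) hb (by nlinarith)
  have e : a*R+γ - (a*(-R)+γ) = 2*R*a := by ring
  rw [e] at step4
  rw [step2, step3, smul_eq_mul] at step1
  have ha' : (0:ℝ) ≤ a⁻¹ := by positivity
  have final : 2*(a⁻¹ * (2*Real.log (1+2*R*a/b))) = (4/a)*Real.log (1+2*R*a/b) := by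
    field_simp; ring
  nlinarith [mul_le_mul_of_nonneg_left step4 ha']


lemma coord_le {d : ℕ} (y : EuclideanSpace ℝ (Fin d)) (i : Fin d) : |y i| ≤ ‖y‖ := by
  rw [EuclideanSpace.norm_eq, ← Real.sqrt_sq_eq_abs]
  apply Real.sqrt_le_sqrt
  have := Finset.single_le_sum (f := fun j => ‖y j‖^2)
    (fun j _ => sq_nonneg _) (Finset.mem_univ i)
  simpa [Real.norm_eq_abs, sq_abs] using this

lemma slice7 {d : ℕ} (hd : 1 ≤ d) (R : ℝ) (hR : 0 ≤ R) (g : ℝ → ℝ)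
    (hg : Continuous g) (hg0 : ∀ x, 0 ≤ g x) (ξT : EuclideanSpace ℝ (Fin d)) (hξ : ξT ≠ 0) :
    (∫ ξ in Metric.closedBall (0 : EuclideanSpace ℝ (Fin d)) R, g ((inner ℝ ξT ξ : ℝ))) ≤
      (2*R)^(d-1) * ∫ s in Set.Icc (-R) R, g (‖ξT‖ * s) := by
  haveI : NeZero d := ⟨by omega⟩
  set a := ‖ξT‖ with ha_def
  have ha : 0 < a := norm_pos_iff.2 hξ
  set e : EuclideanSpace ℝ (Fin d) := a⁻¹ • ξT with he_def
  have he : ‖e‖ = 1 := by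
    rw [he_def, norm_smul, norm_inv, Real.norm_eq_abs, abs_of_pos ha, ← ha_def]
    field_simp
  have hcard : Module.finrank ℝ (EuclideanSpace ℝ (Fin d)) = Fintype.card (Fin d) := by
    simp [finrank_euclideanSpace_fin]
  have hortho : Orthonormal ℝ (Set.restrict ({0} : Set (Fin d)) (fun _ : Fin d => e)) := by
    constructor
    · intro i; exact he
    · intro i j hij
      exact absurd (Subtype.ext (i.2.trans j.2.symm)) hij
  obtain ⟨b, hb⟩ := hortho.exists_orthonormalBasis_extension_of_card_eq hcard
  have hb0 : b 0 = e := hb 0 rfl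
  set T := b.repr.symm with hT_def
  have hT : MeasurePreserving T volume volume := b.measurePreserving_repr_symm
  have hTemb : MeasurableEmbedding T := T.toHomeomorph.measurableEmbedding
  have hTball : T ⁻¹' (Metric.closedBall (0 : EuclideanSpace ℝ (Fin d)) R) =
      Metric.closedBall (0 : EuclideanSpace ℝ (Fin d)) R := by
    ext x
    simp [Metric.mem_closedBall, dist_zero_right, T.norm_map]
  have hkey : ∀ η : EuclideanSpace ℝ (Fin d), (inner ℝ ξT (T η) : ℝ) = a * η 0 := by
    intro η
    have h1 : ξT = a • e := by
      rw [he_def, smul_smul, mul_inv_cancel₀ ha.ne', one_smul]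
    have h2 : e = T (EuclideanSpace.single 0 1) := by
      rw [hT_def, b.repr_symm_single, hb0]
    conv_lhs => rw [h1, h2]
    rw [real_inner_smul_left, T.inner_map_map]
    simp [EuclideanSpace.inner_single_left]
  have B1 : (∫ ξ in Metric.closedBall (0 : EuclideanSpace ℝ (Fin d)) R, g ((inner ℝ ξT ξ : ℝ))) =
      ∫ η in Metric.closedBall (0 : EuclideanSpace ℝ (Fin d)) R, g (a * η 0) := by
    rw [← hT.setIntegral_preimage_emb hTemb (fun ξ => g ((inner ℝ ξT ξ : ℝ)))
      (Metric.closedBall 0 R), hTball]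
    simp only [hkey]
  rw [B1]
  have hψ : MeasurePreserving (MeasurableEquiv.toLp 2 (Fin d → ℝ)) volume volume :=
    (EuclideanSpace.volume_preserving_symm_measurableEquiv_toLp (Fin d)).symm
  have B2 : (∫ η in Metric.closedBall (0 : EuclideanSpace ℝ (Fin d)) R, g (a * η 0)) =
      ∫ x in (MeasurableEquiv.toLp 2 (Fin d → ℝ)) ⁻¹'
        (Metric.closedBall (0 : EuclideanSpace ℝ (Fin d)) R), g (a * x 0) := by
    rw [← hψ.setIntegral_preimage_emb (MeasurableEquiv.toLp 2 (Fin d → ℝ)).measurableEmbedding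
      (fun η => g (a * η 0)) (Metric.closedBall 0 R)]
    rfl
  rw [B2]
  set box : Set (Fin d → ℝ) := Set.pi Set.univ (fun _ => Set.Icc (-R) R) with hbox_def
  have hsub : (MeasurableEquiv.toLp 2 (Fin d → ℝ)) ⁻¹'
      (Metric.closedBall (0 : EuclideanSpace ℝ (Fin d)) R) ⊆ box := by
    intro x hx
    simp only [Set.mem_preimage, Metric.mem_closedBall, dist_zero_right] at hx
    intro i _
    have h := (coord_le ((MeasurableEquiv.toLp 2 (Fin d → ℝ)) x) i).trans hx
    have hxi : ((MeasurableEquiv.toLp 2 (Fin d → ℝ)) x) i = x i := rfl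
    rw [hxi] at h
    exact abs_le.1 h
  have hgc : Continuous (fun x : Fin d → ℝ => g (a * x 0)) := by fun_prop
  have hbox_cpt : IsCompact box := isCompact_univ_pi (fun i => isCompact_Icc)
  have hIcc_box : IntegrableOn (fun x : Fin d → ℝ => g (a * x 0)) box volume :=
    hgc.continuousOn.integrableOn_compact hbox_cpt
  have B3 : (∫ x in (MeasurableEquiv.toLp 2 (Fin d → ℝ)) ⁻¹'
        (Metric.closedBall (0 : EuclideanSpace ℝ (Fin d)) R), g (a * x 0)) ≤
      ∫ x in box, g (a * x 0) :=
    setIntegral_mono_set hIcc_box (Filter.Eventually.of_forall (fun x => hg0 _))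
      (HasSubset.Subset.eventuallyLE hsub)
  refine B3.trans (le_of_eq ?_)
  classical
  set F : Fin d → ℝ → ℝ := fun i =>
    if i = 0 then (Set.Icc (-R) R).indicator (fun s => g (a * s))
    else (Set.Icc (-R) R).indicator (fun _ => 1) with hF_def
  have hbox_meas : MeasurableSet box := MeasurableSet.univ_pi (fun i => measurableSet_Icc)
  have hprod : ∀ x : Fin d → ℝ,
      box.indicator (fun x => g (a * x 0)) x = ∏ i : Fin d, F i (x i) := by
    intro x
    by_cases hx : x ∈ box
    · have hx' : ∀ i, x i ∈ Set.Icc (-R) R := fun i => hx i (Set.mem_univ i)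
      rw [Set.indicator_of_mem hx, Finset.prod_eq_single 0
        (fun i _ hi => by simp [hF_def, hi, Set.indicator_of_mem (hx' i)])
        (fun h => absurd (Finset.mem_univ 0) h)]
      simp [hF_def, Set.indicator_of_mem (hx' 0)]
    · rw [Set.indicator_of_notMem hx]
      have : ∃ i, x i ∉ Set.Icc (-R) R := by
        by_contra h
        push_neg at h
        exact hx (fun i _ => h i)
      obtain ⟨i, hxi⟩ := this
      symm
      apply Finset.prod_eq_zero (Finset.mem_univ i)
      by_cases hi0 : i = 0
      · subst hi0; simp [hF_def, Set.indicator_of_notMem hxi]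
      · simp [hF_def, hi0, Set.indicator_of_notMem hxi]
  rw [← MeasureTheory.integral_indicator hbox_meas, funext hprod,
    MeasureTheory.integral_fintype_prod_volume_eq_prod (ι := Fin d) F,
    ← Finset.mul_prod_erase Finset.univ (fun i => ∫ x, F i x) (Finset.mem_univ 0)]
  have h0 : (∫ x, F 0 x) = ∫ s in Set.Icc (-R) R, g (a * s) := by
    simp only [hF_def, if_pos rfl]
    rw [MeasureTheory.integral_indicator measurableSet_Icc]
  have hi : ∀ i ∈ Finset.univ.erase (0 : Fin d), (∫ x, F i x) = 2*R := by
    intro i hi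
    have hne : i ≠ 0 := (Finset.mem_erase.1 hi).1
    simp only [hF_def, if_neg hne]
    rw [MeasureTheory.integral_indicator_const (1:ℝ) measurableSet_Icc,
      measureReal_def, Real.volume_Icc, smul_eq_mul, mul_one, ENNReal.toReal_ofReal (by linarith)]
    ring
  rw [h0, Finset.prod_congr rfl hi, Finset.prod_const,
    Finset.card_erase_of_mem (Finset.mem_univ 0), Finset.card_univ, Fintype.card_fin]
  ring

lemma habs7 (γ c t : ℝ) (ht : 0 < t) :
    ‖(γ:ℂ) + (c:ℂ) + Complex.I/(t:ℂ)‖ = Real.sqrt ((γ+c)^2 + (1/t)^2) := by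
  have h1 : (γ:ℂ) + (c:ℂ) + Complex.I/(t:ℂ) = ((γ+c : ℝ):ℂ) + ((1/t : ℝ):ℂ) * Complex.I := by
    have htC : (t:ℂ) ≠ 0 := Complex.ofReal_ne_zero.2 ht.ne'
    push_cast
    field_simp
  rw [h1, Complex.norm_add_mul_I]

set_option maxHeartbeats 1000000 in
/-- Degree one linear vertex estimate:
`∫_{|ξ| ≤ K/ε} dξ / |γ + ξ̃·ξ + i/t| ≲ ε^{1-d} min(1/|ξ̃|, t/ε) (1 + |log ε|)`,
the `min` being interpreted as `t/ε` when `ξ̃ = 0`. -/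
theorem stmt7 (d : ℕ) (hd : 1 ≤ d) (K : ℝ) (hK : 0 < K) :
    ∃ C : ℝ, ∀ (ε t γ : ℝ) (ξT : EuclideanSpace ℝ (Fin d)),
      0 < ε → ε ≤ 1 / 2 → 0 < t → t ≤ 1 → ‖ξT‖ ≤ K / ε →
      (∫ ξ in Metric.closedBall (0 : EuclideanSpace ℝ (Fin d)) (K / ε),
          1 / ‖(γ : ℂ) + ((inner ℝ ξT ξ : ℝ) : ℂ) + Complex.I / (t : ℂ)‖)
        ≤ C * ε ^ ((1 : ℝ) - d) *
            (if ξT = 0 then t / ε else min (1 / ‖ξT‖) (t / ε)) * (1 + |Real.log ε|) := by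
  set V1 : ℝ := (volume (Metric.ball (0 : EuclideanSpace ℝ (Fin d)) 1)).toReal with hV1_def
  have hV1 : 0 ≤ V1 := ENNReal.toReal_nonneg
  set M : ℝ := max 2 (Real.log (1 + 2*K^2)) with hM_def
  have hM2 : (2:ℝ) ≤ M := le_max_left _ _
  have hMlog : Real.log (1 + 2*K^2) ≤ M := le_max_right _ _
  clear_value V1 M
  refine ⟨V1 * K^d + (2*K)^(d-1) * 4 * M, ?_⟩
  intro ε t γ ξT hε hε2 ht ht1 hξ
  set C : ℝ := V1 * K^d + (2*K)^(d-1) * 4 * M with hC_def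
  have hCB : (0:ℝ) ≤ (2*K)^(d-1) * 4 * M := by positivity
  have hC1 : V1 * K^d ≤ C := by rw [hC_def]; linarith
  have hC2 : (2*K)^(d-1) * 4 * M ≤ C := by rw [hC_def]; nlinarith [pow_nonneg hK.le d]
  have hC0 : (0:ℝ) ≤ C := le_trans (by positivity) hC1
  set R : ℝ := K / ε with hR_def
  clear_value C R
  have hR : 0 < R := hR_def ▸ div_pos hK hε
  set g : ℝ → ℝ := fun x => 1 / Real.sqrt ((γ + x)^2 + (1/t)^2) with hg_def
  clear_value g
  have hsq : ∀ x : ℝ, 0 < Real.sqrt ((γ + x)^2 + (1/t)^2) := fun x =>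
    Real.sqrt_pos.2 (by positivity)
  have hg0 : ∀ x, 0 ≤ g x := fun x => by rw [hg_def]; positivity
  have hgc : Continuous g := by
    rw [hg_def]
    exact continuous_const.div
      (Real.continuous_sqrt.comp (by fun_prop)) (fun x => (hsq x).ne')
  have hgle : ∀ x, g x ≤ t := by
    intro x
    rw [hg_def]
    have h1 : 1/t ≤ Real.sqrt ((γ + x)^2 + (1/t)^2) := by
      conv_lhs => rw [← Real.sqrt_sq (by positivity : (0:ℝ) ≤ 1/t)]
      apply Real.sqrt_le_sqrt
      nlinarith [sq_nonneg (γ + x)]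
    calc (1:ℝ) / Real.sqrt ((γ + x)^2 + (1/t)^2) ≤ 1 / (1/t) :=
          one_div_le_one_div_of_le (by positivity) h1
      _ = t := one_div_one_div t
  have hIg : (∫ ξ in Metric.closedBall (0 : EuclideanSpace ℝ (Fin d)) R,
      1 / ‖(γ : ℂ) + ((inner ℝ ξT ξ : ℝ) : ℂ) + Complex.I / (t : ℂ)‖)
      = ∫ ξ in Metric.closedBall (0 : EuclideanSpace ℝ (Fin d)) R, g ((inner ℝ ξT ξ : ℝ)) := by
    congr 1
    funext ξ
    rw [habs7 γ _ t ht, hg_def]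
  rw [hIg]
  have hlogε : Real.log ε < 0 := Real.log_neg hε (by linarith)
  have habslog : |Real.log ε| = -Real.log ε := abs_of_neg hlogε
  have hL1 : (1:ℝ) ≤ 1 + |Real.log ε| := le_add_of_nonneg_right (abs_nonneg _)
  have hpow : ε ^ ((1:ℝ) - (d:ℝ)) = ε / ε^d := by
    rw [Real.rpow_sub hε, Real.rpow_one, Real.rpow_natCast]
  have hεd : (0:ℝ) < ε^d := by positivity
  have hcontI : Continuous fun ξ : EuclideanSpace ℝ (Fin d) => g ((inner ℝ ξT ξ : ℝ)) :=
    hgc.comp (continuous_const.inner continuous_id)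
  by_cases hcase : ξT = 0 ∨ t/ε ≤ 1/‖ξT‖
  · -- trivial bound case
    have hminv : (if ξT = 0 then t / ε else min (1 / ‖ξT‖) (t / ε)) = t/ε := by
      rcases hcase with h | h
      · rw [if_pos h]
      · by_cases h0 : ξT = 0
        · rw [if_pos h0]
        · rw [if_neg h0, min_eq_right h]
    rw [hminv, hpow]
    have hIb : IntegrableOn (fun ξ : EuclideanSpace ℝ (Fin d) => g ((inner ℝ ξT ξ : ℝ)))
        (Metric.closedBall 0 R) volume :=
      hcontI.continuousOn.integrableOn_compact (isCompact_closedBall 0 R)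
    have hmono : (∫ ξ in Metric.closedBall (0 : EuclideanSpace ℝ (Fin d)) R, g ((inner ℝ ξT ξ : ℝ)))
        ≤ ∫ _ in Metric.closedBall (0 : EuclideanSpace ℝ (Fin d)) R, t := by
      apply setIntegral_mono_on hIb
        (integrableOn_const measure_closedBall_lt_top.ne)
        measurableSet_closedBall
      intro x _
      exact hgle _
    have hconst : (∫ _ in Metric.closedBall (0 : EuclideanSpace ℝ (Fin d)) R, t)
        = (volume (Metric.closedBall (0 : EuclideanSpace ℝ (Fin d)) R)).toReal * t := by
      rw [setIntegral_const, smul_eq_mul]; rfl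
    have hvol : (volume (Metric.closedBall (0 : EuclideanSpace ℝ (Fin d)) R)).toReal
        = R^d * V1 := by
      rw [Measure.addHaar_closedBall _ _ hR.le, finrank_euclideanSpace_fin,
        ENNReal.toReal_mul, ENNReal.toReal_ofReal (by positivity), hV1_def]
    have hRd : R^d = K^d / ε^d := by rw [hR_def, div_pow]
    have key : (volume (Metric.closedBall (0 : EuclideanSpace ℝ (Fin d)) R)).toReal * t
        ≤ C * (ε / ε^d) * (t/ε) * (1 + |Real.log ε|) := by
      rw [hvol, hRd]
      have he1 : ε / ε^d * (t/ε) = t/ε^d := by field_simp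
      have he2 : K^d / ε^d * t = (K^d * t) / ε^d := by ring
      have ht0 : 0 ≤ t/ε^d := by positivity
      calc K^d / ε^d * V1 * t = (V1 * K^d) * (t/ε^d) := by ring
        _ ≤ C * (t/ε^d) := mul_le_mul_of_nonneg_right hC1 ht0
        _ ≤ C * (t/ε^d) * (1 + |Real.log ε|) := by
            nlinarith [mul_nonneg hC0 ht0]
        _ = C * (ε / ε^d) * (t/ε) * (1 + |Real.log ε|) := by rw [← he1]; ring
    exact le_trans hmono (le_trans (le_of_eq hconst) key)
  · push_neg at hcase
    obtain ⟨hξ0, hlt⟩ := hcase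
    have ha : 0 < ‖ξT‖ := norm_pos_iff.2 hξ0
    have hminv : (if ξT = 0 then t / ε else min (1 / ‖ξT‖) (t / ε)) = 1/‖ξT‖ := by
      rw [if_neg hξ0, min_eq_left hlt.le]
    rw [hminv, hpow]
    have hslice := slice7 hd R hR.le g hgc hg0 ξT hξ0
    have hIcc : (∫ s in Set.Icc (-R) R, g (‖ξT‖ * s)) = ∫ s in (-R)..R, g (‖ξT‖ * s) := by
      rw [MeasureTheory.integral_Icc_eq_integral_Ioc,
        ← intervalIntegral.integral_of_le (by linarith : -R ≤ R)]
    have hcomm : ∀ s : ℝ, g (‖ξT‖ * s) = 1/Real.sqrt ((γ + s*‖ξT‖)^2 + (1/t)^2) := by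
      intro s; rw [hg_def, mul_comm]
    have h1d : (∫ s in (-R)..R, g (‖ξT‖ * s)) ≤
        (4/‖ξT‖) * Real.log (1 + 2*R*‖ξT‖/(1/t)) := by
      have h := oneD ‖ξT‖ (1/t) R γ ha (by positivity) hR.le
      calc (∫ s in (-R)..R, g (‖ξT‖ * s))
          = ∫ s in (-R)..R, 1/Real.sqrt ((γ + s*‖ξT‖)^2 + (1/t)^2) := by
            simp only [hcomm]
        _ ≤ _ := h
    have hdiv : 2*R*‖ξT‖/(1/t) = 2*R*‖ξT‖*t := by
      rw [div_eq_mul_inv, one_div, inv_inv]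
    rw [hdiv] at h1d
    have hterm : 2*R*‖ξT‖*t ≤ 2*R*R := by
      have e0 : (0:ℝ) ≤ 2*R*‖ξT‖ :=
        mul_nonneg (mul_nonneg (by norm_num) hR.le) (norm_nonneg _)
      have e1 : 2*R*‖ξT‖*t ≤ 2*R*‖ξT‖*1 := mul_le_mul_of_nonneg_left ht1 e0
      have e2 : 2*R*‖ξT‖ ≤ 2*R*R :=
        mul_le_mul_of_nonneg_left hξ (mul_nonneg (by norm_num) hR.le)
      linarith
    have hRR : 2*R*R = 2*K^2/ε^2 := by rw [hR_def]; field_simp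
    have hO : (0:ℝ) ≤ 2*R*‖ξT‖*t := by
      have := mul_nonneg (mul_nonneg (mul_nonneg (by norm_num : (0:ℝ) ≤ 2) hR.le)
        (norm_nonneg ξT)) ht.le
      linarith
    have hlogle : Real.log (1 + 2*R*‖ξT‖*t) ≤ M * (1 + |Real.log ε|) := by
      have h2 : (1:ℝ) ≤ 1/ε^2 := by
        rw [le_div_iff₀ (by positivity)]; nlinarith
      have harg : 1 + 2*R*‖ξT‖*t ≤ (1+2*K^2)/ε^2 := by
        have : (1+2*K^2)/ε^2 = 1/ε^2 + 2*K^2/ε^2 := by ring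
        rw [this, ← hRR]
        linarith
      have hlog2 := Real.log_le_log (by linarith) harg
      have hsplit : Real.log ((1+2*K^2)/ε^2) = Real.log (1+2*K^2) - 2*Real.log ε := by
        rw [Real.log_div (by positivity) (by positivity), Real.log_pow]
        push_cast; ring
      calc Real.log (1 + 2*R*‖ξT‖*t) ≤ Real.log (1+2*K^2) - 2*Real.log ε := by
            rw [← hsplit]; exact hlog2
        _ = Real.log (1+2*K^2) + 2*|Real.log ε| := by rw [habslog]; ring
        _ ≤ M + M*|Real.log ε| := by nlinarith [abs_nonneg (Real.log ε)]
        _ = M * (1 + |Real.log ε|) := by ring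
    have hpow2 : (2*R)^(d-1) = (2*K)^(d-1) * (ε/ε^d) := by
      have hd' : d - 1 + 1 = d := by omega
      have hεsplit : ε^d = ε^(d-1) * ε := by rw [← pow_succ, hd']
      have h2R : 2*R = (2*K)/ε := by rw [hR_def]; ring
      rw [h2R, div_pow, hεsplit]
      field_simp
    have hL0 : 0 ≤ Real.log (1 + 2*R*‖ξT‖*t) := Real.log_nonneg (by linarith)
    have hpw0 : (0:ℝ) ≤ (2*R)^(d-1) := pow_nonneg (by linarith) _
    have hεq0 : (0:ℝ) ≤ ε/ε^d := div_nonneg hε.le hεd.le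
    calc (∫ ξ in Metric.closedBall (0 : EuclideanSpace ℝ (Fin d)) R, g ((inner ℝ ξT ξ : ℝ)))
        ≤ (2*R)^(d-1) * ∫ s in Set.Icc (-R) R, g (‖ξT‖ * s) := hslice
      _ ≤ (2*R)^(d-1) * ((4/‖ξT‖) * Real.log (1 + 2*R*‖ξT‖*t)) := by
          apply mul_le_mul_of_nonneg_left _ hpw0
          rw [hIcc]; exact h1d
      _ ≤ (2*R)^(d-1) * ((4/‖ξT‖) * (M * (1 + |Real.log ε|))) := by
          apply mul_le_mul_of_nonneg_left _ hpw0
          exact mul_le_mul_of_nonneg_left hlogle (by positivity)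
      _ = ((2*K)^(d-1) * 4 * M) * (ε/ε^d) * (1/‖ξT‖) * (1 + |Real.log ε|) := by
          rw [hpow2]; ring
      _ ≤ C * (ε/ε^d) * (1/‖ξT‖) * (1 + |Real.log ε|) := by
          apply mul_le_mul_of_nonneg_right _ (by positivity)
          apply mul_le_mul_of_nonneg_right _ (by positivity)
          exact mul_le_mul_of_nonneg_right hC2 hεq0
end

section
/- Let d ≥ 1, K > 0 and 0 < δ ≤ 1. There is a constant C = C(d,K,δ) such that for all 0 < ε ≤ 1/2, all 0 < t ≤ 1, all γ ∈ ℝ and all ξ̃ ∈ ℝ^d with |ξ̃| ≤ K ε^{−1}: ∫_{|ξ| ≤ K ε^{−1}} 𝟙(|ξ̃| ≥ δ ε^{−1} or |γ + ξ̃·ξ| ≥ δ ε^{−2}) · dξ / |γ + ξ̃·ξ + i/t| ≤ C ε^{2−d} (1 + |log ε|). -/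
open MeasureTheory Classical


noncomputable def ff : ℝ → ℝ := fun u => (Real.sqrt (1 + u ^ 2))⁻¹

lemma ff_pos (u : ℝ) : 0 < ff u := by
  unfold ff
  positivity

lemma ff_cont : Continuous ff := by
  unfold ff
  have h : ∀ u : ℝ, Real.sqrt (1 + u ^ 2) ≠ 0 := by
    intro u; positivity
  exact (Real.continuous_sqrt.comp (by continuity)).inv₀ h

lemma ff_anti {u v : ℝ} (hu : 0 ≤ u) (huv : u ≤ v) : ff v ≤ ff u := by
  unfold ff
  apply inv_anti₀ (by positivity)
  apply Real.sqrt_le_sqrt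
  nlinarith

lemma ff_even (u : ℝ) : ff (-u) = ff u := by unfold ff; rw [neg_pow]; ring_nf

lemma ff_integral (p q : ℝ) : ∫ u in p..q, ff u = Real.arsinh q - Real.arsinh p := by
  apply intervalIntegral.integral_eq_sub_of_hasDerivAt
  · intro x _; exact Real.hasDerivAt_arsinh x
  · exact (ff_cont.intervalIntegrable p q)

lemma ff_shift {p q : ℝ} (hp : 0 ≤ p) (hpq : p ≤ q) :
    ∫ u in p..q, ff u ≤ Real.arsinh (q - p) := by
  have h1 : ∫ u in (0:ℝ)..(q-p), ff (u + p) = ∫ u in p..q, ff u := by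
    rw [intervalIntegral.integral_comp_add_right]
    norm_num
  rw [← h1]
  have h2 : ∫ u in (0:ℝ)..(q-p), ff u = Real.arsinh (q - p) := by
    rw [ff_integral]; simp
  rw [← h2]
  apply intervalIntegral.integral_mono_on (by linarith)
  · exact ((ff_cont.comp (by continuity)).intervalIntegrable _ _)
  · exact (ff_cont.intervalIntegrable _ _)
  · intro x hx
    exact ff_anti (hx.1) (by linarith [hx.1])

lemma ff_bound {p q : ℝ} (hpq : p ≤ q) :
    ∫ u in p..q, ff u ≤ 2 * Real.arsinh (q - p) := by
  rcases le_or_gt 0 p with hp | hp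
  · have := ff_shift hp hpq
    have h0 : 0 ≤ Real.arsinh (q - p) := Real.arsinh_nonneg_iff.2 (by linarith)
    linarith
  rcases le_or_gt q 0 with hq | hq
  · have h1 : ∫ u in p..q, ff u = ∫ u in -q..-p, ff u := by
      rw [← intervalIntegral.integral_comp_neg ff]
      congr 1; funext u; exact (ff_even u).symm
    rw [h1]
    have := ff_shift (by linarith : (0:ℝ) ≤ -q) (by linarith : -q ≤ -p)
    have h0 : 0 ≤ Real.arsinh (q - p) := Real.arsinh_nonneg_iff.2 (by linarith)
    have : ∫ u in -q..-p, ff u ≤ Real.arsinh (q - p) := by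
      convert this using 2; ring
    linarith
  · have hsplit : (∫ u in p..(0:ℝ), ff u) + ∫ u in (0:ℝ)..q, ff u = ∫ u in p..q, ff u :=
      intervalIntegral.integral_add_adjacent_intervals
        (ff_cont.intervalIntegrable _ _) (ff_cont.intervalIntegrable _ _)
    have h2 : ∫ u in (0:ℝ)..q, ff u ≤ Real.arsinh (q - p) := by
      have := ff_shift (le_refl (0:ℝ)) hq.le
      simp at this
      calc ∫ u in (0:ℝ)..q, ff u ≤ Real.arsinh q := this
        _ ≤ Real.arsinh (q - p) := Real.arsinh_le_arsinh.2 (by linarith)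
    have h1 : ∫ u in p..(0:ℝ), ff u ≤ Real.arsinh (q - p) := by
      have e : ∫ u in p..(0:ℝ), ff u = ∫ u in (0:ℝ)..(-p), ff u := by
        have := intervalIntegral.integral_comp_neg ff (a := 0) (b := -p)
        simp only [neg_neg, neg_zero] at this
        rw [← this]
        congr 1; funext u; exact ff_even u
      rw [e]
      have h := ff_shift (le_refl (0:ℝ)) (by linarith : (0:ℝ) ≤ -p)
      simp only [sub_zero] at h
      calc ∫ u in (0:ℝ)..(-p), ff u ≤ Real.arsinh (-p) := h
        _ ≤ Real.arsinh (q - p) := Real.arsinh_le_arsinh.2 (by linarith)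
    linarith

lemma arsinh_le_log {x : ℝ} (hx : 0 ≤ x) : Real.arsinh x ≤ Real.log (2 * x + 1) := by
  rw [Real.arsinh]
  apply Real.log_le_log (by positivity)
  have : Real.sqrt (1 + x ^ 2) ≤ 1 + x := by
    rw [show (1:ℝ) + x = Real.sqrt ((1+x)^2) by rw [Real.sqrt_sq (by linarith)]]
    apply Real.sqrt_le_sqrt; nlinarith
  linarith



lemma zim (γ s t : ℝ) : ((γ:ℂ) + (s:ℂ) + Complex.I/(t:ℂ)).im = 1/t := by
  simp [Complex.div_im, Complex.normSq_apply]

lemma zre (γ s t : ℝ) : ((γ:ℂ) + (s:ℂ) + Complex.I/(t:ℂ)).re = γ + s := by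
  simp [Complex.div_re, Complex.normSq_apply]

lemma abs_ge_im (γ s t : ℝ) (ht : 0 < t) :
    1/t ≤ ‖(γ:ℂ) + (s:ℂ) + Complex.I/(t:ℂ)‖ := by
  have := Complex.abs_im_le_norm ((γ:ℂ) + (s:ℂ) + Complex.I/(t:ℂ))
  rw [zim] at this
  calc 1/t = |1/t| := by rw [abs_of_pos (by positivity)]
    _ ≤ _ := this

lemma abs_ge_re (γ s t : ℝ) :
    |γ + s| ≤ ‖(γ:ℂ) + (s:ℂ) + Complex.I/(t:ℂ)‖ := by
  have := Complex.abs_re_le_norm ((γ:ℂ) + (s:ℂ) + Complex.I/(t:ℂ))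
  rwa [zre] at this

lemma one_div_abs_le_ff (γ s t : ℝ) (ht : 0 < t) (ht1 : t ≤ 1) :
    1 / ‖(γ:ℂ) + (s:ℂ) + Complex.I/(t:ℂ)‖ ≤ ff (γ + s) := by
  rw [Complex.norm_def, Complex.normSq_apply, zre, zim]
  unfold ff
  rw [one_div]
  apply inv_anti₀ (by positivity)
  apply Real.sqrt_le_sqrt
  have h1 : 1 ≤ 1/t := by rw [le_div_iff₀ ht]; linarith
  nlinarith


lemma rot (n : ℕ) {a : ℝ} (ha : 0 < a) (ξT : EuclideanSpace ℝ (Fin (n+1)))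
    (hnorm : ‖ξT‖ = a) (R : ℝ) (G : ℝ → ℝ) :
    (∫ ξ in Metric.closedBall (0 : EuclideanSpace ℝ (Fin (n+1))) R, G (inner ℝ ξT ξ : ℝ))
      = ∫ x in Metric.closedBall (0 : EuclideanSpace ℝ (Fin (n+1))) R, G (a * x 0) := by
  have hv : Orthonormal ℝ (Set.restrict {0} (fun _ : Fin (n+1) => a⁻¹ • ξT)) := by
    constructor
    · rintro ⟨i, hi⟩
      show ‖a⁻¹ • ξT‖ = 1
      rw [norm_smul, hnorm, norm_inv, Real.norm_eq_abs, abs_of_pos ha]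
      field_simp
    · rintro ⟨i, hi⟩ ⟨j, hj⟩ hij
      exact absurd (Subtype.ext (by simp only [Set.mem_singleton_iff] at hi hj; simp [hi, hj])) hij
  obtain ⟨b, hb⟩ := hv.exists_orthonormalBasis_extension_of_card_eq
    (by simp [finrank_euclideanSpace])
  have hb0 : b 0 = a⁻¹ • ξT := hb 0 rfl
  have key : ∀ ξ, (inner ℝ ξT ξ : ℝ) = a * b.repr ξ 0 := by
    intro ξ
    rw [OrthonormalBasis.repr_apply_apply, hb0, real_inner_smul_left]
    field_simp
  have hpre : ⇑b.repr ⁻¹' Metric.closedBall 0 R = Metric.closedBall 0 R := by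
    ext ξ
    simp [Metric.mem_closedBall, dist_eq_norm, b.repr.norm_map]
  calc (∫ ξ in Metric.closedBall (0 : EuclideanSpace ℝ (Fin (n+1))) R, G (inner ℝ ξT ξ : ℝ))
      = ∫ ξ in ⇑b.repr ⁻¹' Metric.closedBall 0 R, (fun x => G (a * x 0)) (b.repr ξ) := by
        rw [hpre]
        apply setIntegral_congr_fun (measurableSet_closedBall)
        intro ξ _
        simp only [key ξ]
    _ = ∫ x in Metric.closedBall (0 : EuclideanSpace ℝ (Fin (n+1))) R, G (a * x 0) := by
        exact b.measurePreserving_repr.setIntegral_preimage_emb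
          (b.repr.toHomeomorph.measurableEmbedding) (fun x => G (a * x 0))
          (Metric.closedBall 0 R)


lemma boxbound (n : ℕ) (R : ℝ) (hR : 0 < R) (G : ℝ → ℝ) (hG : Continuous G)
    (hGpos : ∀ s, 0 ≤ G s) :
    (∫ x in Metric.closedBall (0 : EuclideanSpace ℝ (Fin (n+1))) R, G (x 0))
      ≤ (∫ s in Set.Icc (-R) R, G s) * (2*R)^n := by
  set e := (MeasurableEquiv.toLp 2 (Fin (n+1) → ℝ)).symm with he
  have hcoord : ∀ (y : Fin (n+1) → ℝ) (i : Fin (n+1)), (e.symm y) i = y i := fun y i => rfl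
  set box : Set (Fin (n+1) → ℝ) := Set.pi Set.univ (fun _ => Set.Icc (-R) R) with hbox
  have hboxm : MeasurableSet box := MeasurableSet.univ_pi (fun _ => measurableSet_Icc)
  have hGy : Continuous (fun y : Fin (n+1) → ℝ => G (y 0)) := hG.comp (continuous_apply 0)
  have h1 : (∫ x in Metric.closedBall (0 : EuclideanSpace ℝ (Fin (n+1))) R, G (x 0))
      = ∫ y in ⇑e.symm ⁻¹' Metric.closedBall 0 R, G (y 0) := by
    exact (((EuclideanSpace.volume_preserving_symm_measurableEquiv_toLp _).symm e).setIntegral_preimage_emb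
      (e.symm.measurableEmbedding) (fun x => G (x 0)) (Metric.closedBall 0 R)).symm
  have hsub : ⇑e.symm ⁻¹' Metric.closedBall 0 R ⊆ box := by
    intro y hy
    simp only [Set.mem_preimage, Metric.mem_closedBall, dist_zero_right] at hy
    intro i _
    have h2 : |y i| ≤ ‖e.symm y‖ :=
      calc |y i| = Real.sqrt (‖(e.symm y) i‖^2) := by
            rw [hcoord, Real.norm_eq_abs, Real.sqrt_sq_eq_abs, abs_abs]
        _ ≤ Real.sqrt (∑ j, ‖(e.symm y) j‖^2) := Real.sqrt_le_sqrt
            (Finset.single_le_sum (f := fun j => ‖(e.symm y) j‖^2)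
              (fun j _ => by positivity) (Finset.mem_univ i))
        _ = ‖e.symm y‖ := (EuclideanSpace.norm_eq _).symm
    constructor
    · linarith [abs_le.1 (h2.trans hy) |>.1]
    · linarith [abs_le.1 (h2.trans hy) |>.2]
  have h2 : (∫ y in ⇑e.symm ⁻¹' Metric.closedBall 0 R, G (y 0))
      ≤ ∫ y in box, G (y 0) := by
    apply setIntegral_mono_set
    · exact hGy.continuousOn.integrableOn_compact (isCompact_univ_pi fun _ => isCompact_Icc)
    · exact Filter.Eventually.of_forall (fun y => hGpos _)
    · exact Filter.Eventually.of_forall hsub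
  have h3 : (∫ y in box, G (y 0)) = (∫ s in Set.Icc (-R) R, G s) * (2*R)^n := by
    set F : Fin (n+1) → ℝ → ℝ :=
      Fin.cons ((Set.Icc (-R) R).indicator G)
        (fun _ => (Set.Icc (-R) R).indicator (fun _ => (1:ℝ))) with hF
    have hptwise : ∀ y : Fin (n+1) → ℝ,
        box.indicator (fun y => G (y 0)) y = ∏ i : Fin (n+1), F i (y i) := by
      intro y
      by_cases hy : y ∈ box
      · rw [Set.indicator_of_mem hy]
        have hyi : ∀ i, y i ∈ Set.Icc (-R) R := fun i => hy i (Set.mem_univ i)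
        rw [Fin.prod_univ_succ]
        have e0 : F 0 (y 0) = G (y 0) := by
          rw [hF, Fin.cons_zero, Set.indicator_of_mem (hyi 0)]
        have es : ∀ i : Fin n, F i.succ (y i.succ) = 1 := by
          intro i
          rw [hF, Fin.cons_succ, Set.indicator_of_mem (hyi i.succ)]
        rw [e0, Finset.prod_congr rfl (fun i _ => es i)]
        simp
      · rw [Set.indicator_of_notMem hy]
        obtain ⟨i, hi⟩ : ∃ i, y i ∉ Set.Icc (-R) R := by
          by_contra h
          push_neg at h
          exact hy (fun i _ => h i)
        refine (Finset.prod_eq_zero (Finset.mem_univ i) ?_).symm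
        rcases Fin.eq_zero_or_eq_succ i with h0 | ⟨j, rfl⟩
        · subst h0; rw [hF, Fin.cons_zero]; exact Set.indicator_of_notMem hi _
        · rw [hF, Fin.cons_succ]; exact Set.indicator_of_notMem hi _
    rw [← integral_indicator hboxm]
    calc (∫ y, box.indicator (fun y => G (y 0)) y)
        = ∫ y : Fin (n+1) → ℝ, ∏ i, F i (y i) := by
          congr 1; funext y; exact hptwise y
      _ = ∏ i : Fin (n+1), ∫ s : ℝ, F i s := integral_fintype_prod_volume_eq_prod F
      _ = (∫ s in Set.Icc (-R) R, G s) * (2*R)^n := by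
          rw [Fin.prod_univ_succ]
          have e0 : (∫ s : ℝ, F 0 s) = ∫ s in Set.Icc (-R) R, G s := by
            rw [hF, Fin.cons_zero, integral_indicator measurableSet_Icc]
          have es : ∀ i : Fin n, (∫ s : ℝ, F i.succ s) = 2*R := by
            intro i
            rw [hF, Fin.cons_succ, integral_indicator measurableSet_Icc, setIntegral_const,
              measureReal_def, Real.volume_Icc, smul_eq_mul, mul_one, ENNReal.toReal_ofReal (by linarith)]
            ring
          rw [e0, Finset.prod_congr rfl (fun i _ => es i)]
          simp
  rw [h1, ← h3]
  exact h2


noncomputable def G0 (γ t : ℝ) : ℝ → ℝ :=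
  fun r => 1 / ‖(γ:ℂ) + (r:ℂ) + Complex.I/(t:ℂ)‖

lemma G0_pos (γ t r : ℝ) : 0 ≤ G0 γ t r :=
  one_div_nonneg.2 (norm_nonneg _)

lemma G0_cont (γ t : ℝ) (ht : 0 < t) : Continuous (G0 γ t) := by
  unfold G0
  have hne : ∀ r : ℝ, ‖(γ:ℂ) + (r:ℂ) + Complex.I/(t:ℂ)‖ ≠ 0 := by
    intro r
    have := abs_ge_im γ r t ht
    have h1 : (0:ℝ) < 1/t := by positivity
    linarith
  apply Continuous.div continuous_const _ hne
  exact continuous_norm.comp (by continuity)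

lemma oneD_s8 (R a γ t : ℝ) (hR : 0 < R) (ha : 0 < a) (ht : 0 < t) (ht1 : t ≤ 1) :
    (∫ s in Set.Icc (-R) R, G0 γ t (a * s))
      ≤ a⁻¹ * (2 * Real.arsinh (2*(a*R))) := by
  rw [MeasureTheory.integral_Icc_eq_integral_Ioc,
    ← intervalIntegral.integral_of_le (by linarith : -R ≤ R)]
  have step1 : (∫ s in (-R)..R, G0 γ t (a * s)) ≤ ∫ s in (-R)..R, ff (a * s + γ) := by
    apply intervalIntegral.integral_mono_on (by linarith)
    · exact ((G0_cont γ t ht).comp (by continuity)).intervalIntegrable _ _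
    · exact (ff_cont.comp (by continuity)).intervalIntegrable _ _
    · intro s _
      have := one_div_abs_le_ff γ (a * s) t ht ht1
      rw [show γ + a * s = a * s + γ by ring] at this
      exact this
  have step2 : (∫ s in (-R)..R, ff (a * s + γ)) ≤ a⁻¹ * (2 * Real.arsinh (2*(a*R))) := by
    rw [intervalIntegral.integral_comp_mul_add ff ha.ne' γ, smul_eq_mul]
    have hle : a * -R + γ ≤ a * R + γ := by nlinarith
    have := ff_bound hle
    rw [show a * R + γ - (a * -R + γ) = 2*(a*R) by ring] at this
    have hainv : (0:ℝ) ≤ a⁻¹ := by positivity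
    exact mul_le_mul_of_nonneg_left this hainv
  linarith

lemma caseB (n : ℕ) (R a γ t : ℝ) (ξT : EuclideanSpace ℝ (Fin (n+1))) (hnorm : ‖ξT‖ = a)
    (hR : 0 < R) (ha : 0 < a) (ht : 0 < t) (ht1 : t ≤ 1) :
    (∫ ξ in Metric.closedBall (0 : EuclideanSpace ℝ (Fin (n+1))) R,
        1 / ‖(γ:ℂ) + ((inner ℝ ξT ξ : ℝ):ℂ) + Complex.I/(t:ℂ)‖)
      ≤ a⁻¹ * (2 * Real.arsinh (2*(a*R))) * (2*R)^n := by
  have h1 : (∫ ξ in Metric.closedBall (0 : EuclideanSpace ℝ (Fin (n+1))) R,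
      1 / ‖(γ:ℂ) + ((inner ℝ ξT ξ : ℝ):ℂ) + Complex.I/(t:ℂ)‖)
      = ∫ x in Metric.closedBall (0 : EuclideanSpace ℝ (Fin (n+1))) R,
          (fun s => G0 γ t (a * s)) (x 0) := rot n ha ξT hnorm R (G0 γ t)
  rw [h1]
  calc (∫ x in Metric.closedBall (0 : EuclideanSpace ℝ (Fin (n+1))) R,
        (fun s => G0 γ t (a * s)) (x 0))
      ≤ (∫ s in Set.Icc (-R) R, G0 γ t (a * s)) * (2*R)^n := by
        apply boxbound n R hR _ ((G0_cont γ t ht).comp (by continuity))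
          (fun s => G0_pos γ t _)
    _ ≤ (a⁻¹ * (2 * Real.arsinh (2*(a*R)))) * (2*R)^n := by
        apply mul_le_mul_of_nonneg_right (oneD_s8 R a γ t hR ha ht ht1) (by positivity)


lemma arithB (n : ℕ) (K δ ε a : ℝ) (hK : 0 < K) (hδ0 : 0 < δ) (hδ1 : δ ≤ 1) (hε : 0 < ε)
    (hε2 : ε ≤ 1/2) (ha1 : δ/ε ≤ a) (ha2 : a ≤ K/ε) :
    a⁻¹ * (2 * Real.arsinh (2*(a*(K/ε)))) * (2*(K/ε))^n
      ≤ ((2*K)^n * (2/δ) * (Real.log (4*K^2+1) + 2)) * (ε^2/ε^(n+1)) * (1 + |Real.log ε|) := by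
  have ha : 0 < a := lt_of_lt_of_le (by positivity) ha1
  have h1 : a⁻¹ ≤ ε/δ := by
    have := inv_anti₀ (show (0:ℝ) < δ/ε by positivity) ha1
    rwa [show (δ/ε)⁻¹ = ε/δ by field_simp] at this
  have hlogε : Real.log ε < 0 := Real.log_neg hε (by linarith)
  have habs : |Real.log ε| = -Real.log ε := abs_of_neg hlogε
  have hlogM : 0 ≤ Real.log (4*K^2+1) := Real.log_nonneg (by nlinarith)
  have h2 : Real.arsinh (2*(a*(K/ε))) ≤ (Real.log (4*K^2+1) + 2) * (1 + |Real.log ε|) := by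
    have hx : (0:ℝ) ≤ 2*(a*(K/ε)) := by positivity
    have step1 := arsinh_le_log hx
    have step2 : Real.log (2*(2*(a*(K/ε)))+1) ≤ Real.log ((4*K^2+1)/ε^2) := by
      apply Real.log_le_log (by positivity)
      have hεsq : 1 ≤ 1/ε^2 := by
        rw [le_div_iff₀ (by positivity)]
        nlinarith
      have : a * (K/ε) ≤ (K/ε)*(K/ε) := by
        apply mul_le_mul_of_nonneg_right ha2 (by positivity)
      have hKε : (K/ε)*(K/ε) = K^2/ε^2 := by ring
      rw [le_div_iff₀ (by positivity : (0:ℝ) < ε^2)]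
      have hε1 : ε^2 ≤ 1 := by nlinarith
      have haK : a * (K/ε) * ε^2 ≤ K^2 := by
        have : a * (K/ε) ≤ K^2/ε^2 := by rw [← hKε]; exact this
        calc a * (K/ε) * ε^2 ≤ K^2/ε^2 * ε^2 := by
              apply mul_le_mul_of_nonneg_right this (by positivity)
          _ = K^2 := by field_simp
      nlinarith
    have step3 : Real.log ((4*K^2+1)/ε^2) = Real.log (4*K^2+1) + 2 * |Real.log ε| := by
      rw [Real.log_div (by nlinarith) (by positivity), Real.log_pow, habs]
      push_cast
      ring
    have := step1.trans (step2.trans_eq step3)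
    have habs0 : 0 ≤ |Real.log ε| := abs_nonneg _
    nlinarith
  have h3 : (2*(K/ε))^n = (2*K)^n/ε^n := by
    rw [show 2*(K/ε) = (2*K)/ε by ring, div_pow]
  rw [h3]
  have hrw : ((2*K)^n * (2/δ) * (Real.log (4*K^2+1) + 2)) * (ε^2/ε^(n+1)) * (1 + |Real.log ε|)
      = (ε/δ) * (2 * ((Real.log (4*K^2+1) + 2) * (1 + |Real.log ε|))) * ((2*K)^n/ε^n) := by
    field_simp
    ring
  rw [hrw]
  have harsinh : 0 ≤ Real.arsinh (2*(a*(K/ε))) := Real.arsinh_nonneg_iff.2 (by positivity)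
  apply mul_le_mul
  · apply mul_le_mul h1 (by linarith) (by positivity) (by positivity)
  · exact le_refl _
  · positivity
  · positivity


/-- Degree one linear vertex estimate with nondegeneracy restriction:
`∫_{|ξ| ≤ K/ε} 𝟙(|ξ̃| ≥ δ/ε or |γ + ξ̃·ξ| ≥ δ/ε²) dξ / |γ + ξ̃·ξ + i/t|
  ≲ ε^{2-d} (1 + |log ε|)`. -/
theorem stmt8 (d : ℕ) (hd : 1 ≤ d) (K δ : ℝ) (hK : 0 < K) (hδ0 : 0 < δ) (hδ1 : δ ≤ 1) :
    ∃ C : ℝ, ∀ (ε t γ : ℝ) (ξT : EuclideanSpace ℝ (Fin d)),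
      0 < ε → ε ≤ 1 / 2 → 0 < t → t ≤ 1 → ‖ξT‖ ≤ K / ε →
      (∫ ξ in Metric.closedBall (0 : EuclideanSpace ℝ (Fin d)) (K / ε),
          (if δ / ε ≤ ‖ξT‖ ∨ δ / ε ^ 2 ≤ |γ + (inner ℝ ξT ξ : ℝ)| then
            1 / ‖(γ : ℂ) + ((inner ℝ ξT ξ : ℝ) : ℂ) + Complex.I / (t : ℂ)‖
          else 0))
        ≤ C * ε ^ ((2 : ℝ) - d) * (1 + |Real.log ε|) := by
  obtain ⟨n, rfl⟩ : ∃ n, d = n + 1 := ⟨d - 1, (Nat.succ_pred_eq_of_pos hd).symm⟩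
  set cA : ℝ := (volume (Metric.closedBall (0 : EuclideanSpace ℝ (Fin (n+1))) 1)).toReal
    with hcA
  have hcA0 : 0 ≤ cA := ENNReal.toReal_nonneg
  have hlogM : 0 ≤ Real.log (4*K^2+1) := Real.log_nonneg (by nlinarith)
  refine ⟨K^(n+1) * cA / δ + (2*K)^n * (2/δ) * (Real.log (4*K^2+1) + 2), ?_⟩
  intro ε t γ ξT hε hε2 ht ht1 hξT
  set R : ℝ := K / ε with hRdef
  have hRpos : 0 < R := by positivity
  set g : EuclideanSpace ℝ (Fin (n+1)) → ℝ := fun ξ => G0 γ t (inner ℝ ξT ξ : ℝ) with hgdef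
  have hg_cont : Continuous g :=
    (G0_cont γ t ht).comp (Continuous.inner continuous_const continuous_id)
  have hg_nonneg : ∀ ξ, 0 ≤ g ξ := fun ξ => G0_pos _ _ _
  have hgint : IntegrableOn g (Metric.closedBall 0 R) :=
    hg_cont.continuousOn.integrableOn_compact (isCompact_closedBall _ _)
  set S : Set (EuclideanSpace ℝ (Fin (n+1))) :=
    {ξ | δ / ε ≤ ‖ξT‖ ∨ δ / ε ^ 2 ≤ |γ + (inner ℝ ξT ξ : ℝ)|} with hSdef
  have hS : MeasurableSet S := by
    rw [hSdef]
    simp only [Set.setOf_or]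
    apply MeasurableSet.union
    · exact MeasurableSet.const _
    · apply IsClosed.measurableSet
      apply isClosed_le continuous_const
      exact (continuous_const.add (Continuous.inner continuous_const continuous_id)).abs
  have hrw1 : (∫ ξ in Metric.closedBall (0 : EuclideanSpace ℝ (Fin (n+1))) R,
      (if δ / ε ≤ ‖ξT‖ ∨ δ / ε ^ 2 ≤ |γ + (inner ℝ ξT ξ : ℝ)| then
        1 / ‖(γ : ℂ) + ((inner ℝ ξT ξ : ℝ) : ℂ) + Complex.I / (t : ℂ)‖
      else 0))
      = ∫ ξ in Metric.closedBall 0 R ∩ S, g ξ := by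
    rw [← setIntegral_indicator hS]
    apply setIntegral_congr_fun measurableSet_closedBall
    intro ξ _
    by_cases h : δ / ε ≤ ‖ξT‖ ∨ δ / ε ^ 2 ≤ |γ + (inner ℝ ξT ξ : ℝ)|
    · simp only [if_pos h, Set.indicator_of_mem (show ξ ∈ S from h)]
      rfl
    · simp only [if_neg h, Set.indicator_of_notMem (show ξ ∉ S from h)]
  rw [hrw1]
  have hpow : (ε:ℝ) ^ ((2 : ℝ) - ((n+1 : ℕ):ℝ)) = ε^2 / ε^(n+1) := by
    rw [Real.rpow_sub hε, Real.rpow_two, Real.rpow_natCast]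
  rcases le_or_gt (δ / ε) ‖ξT‖ with hcase | hcase
  · -- Case B
    set a : ℝ := ‖ξT‖ with hadef
    have ha : 0 < a := lt_of_lt_of_le (by positivity) hcase
    have step1 : (∫ ξ in Metric.closedBall 0 R ∩ S, g ξ)
        ≤ ∫ ξ in Metric.closedBall (0 : EuclideanSpace ℝ (Fin (n+1))) R, g ξ := by
      apply setIntegral_mono_set hgint
        (Filter.Eventually.of_forall (fun ξ => hg_nonneg ξ))
        (Filter.Eventually.of_forall Set.inter_subset_left)
    have step2 := caseB n R a γ t ξT rfl hRpos ha ht ht1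
    have step3 := arithB n K δ ε a hK hδ0 hδ1 hε hε2 hcase hξT
    calc (∫ ξ in Metric.closedBall 0 R ∩ S, g ξ)
        ≤ a⁻¹ * (2 * Real.arsinh (2*(a*R))) * (2*R)^n := step1.trans step2
      _ ≤ ((2*K)^n * (2/δ) * (Real.log (4*K^2+1) + 2)) * (ε^2/ε^(n+1)) * (1 + |Real.log ε|) :=
          step3
      _ ≤ (K^(n+1) * cA / δ + (2*K)^n * (2/δ) * (Real.log (4*K^2+1) + 2))
            * ε ^ ((2 : ℝ) - ((n+1 : ℕ):ℝ)) * (1 + |Real.log ε|) := by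
          rw [hpow]
          have h1 : (0:ℝ) ≤ ε^2/ε^(n+1) := by positivity
          have h2 : (0:ℝ) ≤ 1 + |Real.log ε| := by positivity
          have h3 : (0:ℝ) ≤ K^(n+1) * cA / δ := by positivity
          nlinarith [mul_nonneg h1 h2]
  · -- Case A
    have hkey : ∀ ξ ∈ Metric.closedBall (0 : EuclideanSpace ℝ (Fin (n+1))) R ∩ S,
        g ξ ≤ ε^2/δ := by
      rintro ξ ⟨-, hξS⟩
      have h2 : δ / ε ^ 2 ≤ |γ + (inner ℝ ξT ξ : ℝ)| := by
        rcases hξS with h | h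
        · exact absurd h (not_le.2 hcase)
        · exact h
      have h3 : δ / ε ^ 2 ≤ ‖(γ:ℂ) + ((inner ℝ ξT ξ : ℝ):ℂ) + Complex.I/(t:ℂ)‖ :=
        h2.trans (abs_ge_re γ _ t)
      have h4 : (0:ℝ) < δ / ε^2 := by positivity
      rw [hgdef]
      show 1 / ‖(γ:ℂ) + ((inner ℝ ξT ξ : ℝ):ℂ) + Complex.I/(t:ℂ)‖ ≤ ε^2/δ
      rw [show (ε:ℝ)^2/δ = 1/(δ/ε^2) by field_simp]
      exact one_div_le_one_div_of_le h4 h3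
    have hmeas : MeasurableSet (Metric.closedBall (0 : EuclideanSpace ℝ (Fin (n+1))) R ∩ S) :=
      measurableSet_closedBall.inter hS
    have hballvol : (volume (Metric.closedBall (0 : EuclideanSpace ℝ (Fin (n+1))) R)).toReal
        = R^(n+1) * cA := by
      rw [Measure.addHaar_closedBall' _ _ hRpos.le, ENNReal.toReal_mul,
        ENNReal.toReal_ofReal (by positivity)]
      congr 2
      simp [finrank_euclideanSpace]
    have hvol_fin : volume (Metric.closedBall (0 : EuclideanSpace ℝ (Fin (n+1))) R) ≠ ⊤ :=
      (MeasureTheory.measure_closedBall_lt_top).ne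
    calc (∫ ξ in Metric.closedBall 0 R ∩ S, g ξ)
        ≤ ∫ _ in Metric.closedBall (0 : EuclideanSpace ℝ (Fin (n+1))) R ∩ S, (ε^2/δ) := by
          apply setIntegral_mono_on (hgint.mono_set Set.inter_subset_left) ?_ hmeas hkey
          exact integrableOn_const ((measure_mono Set.inter_subset_left).trans_lt
              MeasureTheory.measure_closedBall_lt_top).ne
      _ = (volume (Metric.closedBall (0 : EuclideanSpace ℝ (Fin (n+1))) R ∩ S)).toReal
            * (ε^2/δ) := by rw [setIntegral_const, smul_eq_mul, measureReal_def]
      _ ≤ (R^(n+1) * cA) * (ε^2/δ) := by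
          have hm : (volume (Metric.closedBall (0 : EuclideanSpace ℝ (Fin (n+1))) R ∩ S)).toReal
              ≤ R^(n+1) * cA := by
            rw [← hballvol]
            exact ENNReal.toReal_mono hvol_fin (measure_mono Set.inter_subset_left)
          have hc : (0:ℝ) ≤ ε^2/δ := by positivity
          exact mul_le_mul_of_nonneg_right hm hc
      _ ≤ (K^(n+1) * cA / δ + (2*K)^n * (2/δ) * (Real.log (4*K^2+1) + 2))
            * ε ^ ((2 : ℝ) - ((n+1 : ℕ):ℝ)) * (1 + |Real.log ε|) := by
          rw [hpow]
          have hR1 : R^(n+1) * cA * (ε^2/δ) = (K^(n+1) * cA / δ) * (ε^2/ε^(n+1)) := by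
            rw [hRdef, div_pow]
            ring
          rw [hR1]
          have h1 : (0:ℝ) ≤ ε^2/ε^(n+1) := by positivity
          have h2 : (1:ℝ) ≤ 1 + |Real.log ε| := by linarith [abs_nonneg (Real.log ε)]
          have h3 : (0:ℝ) ≤ K^(n+1) * cA / δ := by positivity
          have h4 : (0:ℝ) ≤ (2*K)^n * (2/δ) * (Real.log (4*K^2+1) + 2) := by positivity
          nlinarith [mul_nonneg h1 (abs_nonneg (Real.log ε))]
end

section
/- Let d ≥ 1 and K > 0, and let m : [0,∞) → [0,∞) be C¹ with m(0) = 0. There is a constant C = C(d,K,m) such that for all 0 < ε ≤ 1/2, all 0 < t ≤ 1, all γ ∈ ℝ and all ξ̃ ∈ ℝ^d with |ξ̃| ≤ K ε^{−1}: ∫_{|ξ| ≤ K ε^{−1}} m(ε|ξ̃|) dξ / |γ + ξ̃·ξ + i/t| ≤ C ε^{2−d} (1 + |log ε|). -/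
open MeasureTheory intervalIntegral


lemma aux_pos_s9 (b p l : ℝ) (hb : 0 < b) (hp : 0 ≤ p) (hl : 0 ≤ l) :
    ∫ u in p..(p+l), (b + u)⁻¹ ≤ Real.log (1 + l / b) := by
  have h1 : (∫ u in p..(p+l), (b + u)⁻¹) = ∫ x in (p+b)..(p+l+b), x⁻¹ := by
    simpa [add_comm] using
      intervalIntegral.integral_comp_add_right (a := p) (b := p + l) (fun x => x⁻¹) b
  have h0 : (0:ℝ) ∉ Set.uIcc (p+b) (p+l+b) := by
    rw [Set.uIcc_of_le (by linarith)]
    intro h; simp at h; linarith [h.1]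
  rw [h1, integral_inv h0]
  have h2 : (p+l+b)/(p+b) ≤ 1 + l / b := by
    have he : 1 + l / b = (b + l) / b := by field_simp
    rw [div_le_iff₀ (by linarith), he, div_mul_eq_mul_div, le_div_iff₀ hb]
    nlinarith
  exact (Real.log_le_log (by positivity) h2)

lemma aux_F_pos (b p q : ℝ) (hb : 0 < b) (hp : 0 ≤ p) (hpq : p ≤ q) :
    ∫ u in p..q, 2 * (b + |u|)⁻¹ ≤ 2 * Real.log (1 + (q - p) / b) := by
  have hcong : (∫ u in p..q, 2 * (b + |u|)⁻¹) = ∫ u in p..q, 2 * (b + u)⁻¹ := by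
    apply intervalIntegral.integral_congr
    intro u hu
    rw [Set.uIcc_of_le hpq] at hu
    show 2 * (b + |u|)⁻¹ = 2 * (b + u)⁻¹
    rw [abs_of_nonneg (le_trans hp hu.1)]
  rw [hcong, intervalIntegral.integral_const_mul]
  have := aux_pos_s9 b p (q - p) hb hp (by linarith)
  rw [show p + (q - p) = q by ring] at this
  linarith

lemma aux_F_neg (b p q : ℝ) (hb : 0 < b) (hq : q ≤ 0) (hpq : p ≤ q) :
    ∫ u in p..q, 2 * (b + |u|)⁻¹ ≤ 2 * Real.log (1 + (q - p) / b) := by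
  have h1 : (∫ u in p..q, 2 * (b + |u|)⁻¹) = ∫ u in (-q)..(-p), 2 * (b + |u|)⁻¹ := by
    rw [← intervalIntegral.integral_comp_neg (fun u => 2 * (b + |u|)⁻¹)]
    simp
  rw [h1]
  have := aux_F_pos b (-q) (-p) hb (by linarith) (by linarith)
  rw [show -p - -q = q - p by ring] at this
  exact this


lemma contF (b : ℝ) (hb : 0 < b) : Continuous (fun u : ℝ => 2 * (b + |u|)⁻¹) :=
  continuous_const.mul ((continuous_const.add continuous_abs).inv₀
    (fun x => ne_of_gt (add_pos_of_pos_of_nonneg hb (abs_nonneg x))))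

lemma aux_interval (b c L : ℝ) (hb : 0 < b) (hL : 0 ≤ L) :
    ∫ u in c..(c+L), 2 * (b + |u|)⁻¹ ≤ 4 * Real.log (1 + L / b) := by
  have hlog : (0:ℝ) ≤ Real.log (1 + L / b) := by
    apply Real.log_nonneg
    have : 0 ≤ L / b := by positivity
    linarith
  have hmono : ∀ x : ℝ, 0 ≤ x → x ≤ L → Real.log (1 + x / b) ≤ Real.log (1 + L / b) := by
    intro x hx hXL
    apply Real.log_le_log (by positivity)
    gcongr
  rcases le_or_gt 0 c with hc | hc
  · have := aux_F_pos b c (c+L) hb hc (by linarith)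
    have h2 := hmono (c + L - c) (by linarith) (by linarith)
    linarith
  rcases le_or_gt (c+L) 0 with hcl | hcl
  · have := aux_F_neg b c (c+L) hb hcl (by linarith)
    have h2 := hmono (c + L - c) (by linarith) (by linarith)
    linarith
  · have hint : ∀ x y : ℝ, IntervalIntegrable (fun u : ℝ => 2 * (b + |u|)⁻¹) volume x y :=
      fun x y => (contF b hb).intervalIntegrable x y
    rw [← intervalIntegral.integral_add_adjacent_intervals (b := 0) (hint c 0) (hint 0 (c+L))]
    have h1 := aux_F_neg b c 0 hb le_rfl hc.le
    have h2 := aux_F_pos b 0 (c+L) hb le_rfl hcl.le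
    have h3 := hmono (0 - c) (by linarith) (by linarith)
    have h4 := hmono (c + L - 0) (by linarith) (by linarith)
    linarith


lemma contH (b : ℝ) (hb : 0 < b) : Continuous (fun u : ℝ => (max b |u|)⁻¹) :=
  (continuous_const.max continuous_abs).inv₀
    (fun x => ne_of_gt (lt_of_lt_of_le hb (le_max_left _ _)))

lemma aux_oneD (b c L : ℝ) (hb : 0 < b) (hL : 0 ≤ L) :
    ∫ u in Set.Icc c (c+L), (max b |u|)⁻¹ ≤ 4 * Real.log (1 + L / b) := by
  have hIcc : (∫ u in Set.Icc c (c+L), (max b |u|)⁻¹) = ∫ u in c..(c+L), (max b |u|)⁻¹ := by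
    rw [intervalIntegral.integral_of_le (by linarith), integral_Icc_eq_integral_Ioc]
  rw [hIcc]
  have hpt : ∀ u ∈ Set.uIcc c (c+L), (max b |u|)⁻¹ ≤ 2 * (b + |u|)⁻¹ := by
    intro u _
    have h1 : 0 < max b |u| := lt_of_lt_of_le hb (le_max_left _ _)
    have h2 : b + |u| ≤ 2 * max b |u| := by
      have := le_max_left b |u|; have := le_max_right b |u|
      linarith
    have h3 : (2:ℝ) * (b + |u|)⁻¹ = ((b + |u|)/2)⁻¹ := by
      rw [inv_div]; ring
    rw [h3]
    exact inv_anti₀ (by positivity) (by linarith)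
  calc (∫ u in c..(c+L), (max b |u|)⁻¹) ≤ ∫ u in c..(c+L), 2 * (b + |u|)⁻¹ := by
        apply intervalIntegral.integral_mono_on (by linarith)
        · exact ((continuous_const.max continuous_abs).inv₀
            (fun x => ne_of_gt (lt_of_lt_of_le hb (le_max_left _ _)))).intervalIntegrable _ _
        · exact (continuous_const.mul ((continuous_const.add continuous_abs).inv₀
            (fun x => ne_of_gt (add_pos_of_pos_of_nonneg hb (abs_nonneg x))))).intervalIntegrable _ _
        · intro u hu
          exact hpt u (by rw [Set.uIcc_of_le (by linarith)]; exact hu)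
    _ ≤ 4 * Real.log (1 + L / b) := aux_interval b c L hb hL


lemma aux_subst (b a γ R : ℝ) (hb : 0 < b) (ha : 0 < a) (hR : 0 ≤ R) :
    ∫ s in Set.Icc (-R) R, (max b |γ + a * s|)⁻¹
      ≤ a⁻¹ * (4 * Real.log (1 + 2 * a * R / b)) := by
  have h1 : (∫ s in Set.Icc (-R) R, (max b |γ + a * s|)⁻¹)
      = ∫ s in (-R)..R, (max b |a * s + γ|)⁻¹ := by
    rw [intervalIntegral.integral_of_le (by linarith), integral_Icc_eq_integral_Ioc]
    congr 1; ext s; rw [add_comm]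
  have h2 : (∫ s in (-R)..R, (max b |a * s + γ|)⁻¹)
      = a⁻¹ * ∫ u in (a * (-R) + γ)..(a * R + γ), (max b |u|)⁻¹ := by
    rw [intervalIntegral.integral_comp_mul_add (fun u => (max b |u|)⁻¹) (ne_of_gt ha) γ]
    simp [smul_eq_mul]
  rw [h1, h2]
  have h3 : (∫ u in (a * (-R) + γ)..(a * R + γ), (max b |u|)⁻¹)
      ≤ 4 * Real.log (1 + 2 * a * R / b) := by
    have hle : a * (-R) + γ ≤ a * R + γ := by nlinarith
    rw [intervalIntegral.integral_of_le hle, ← integral_Icc_eq_integral_Ioc]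
    have := aux_oneD b (a * (-R) + γ) (2 * a * R) hb (by positivity)
    rw [show a * (-R) + γ + 2 * a * R = a * R + γ by ring] at this
    exact this
  have ha' : (0:ℝ) ≤ a⁻¹ := by positivity
  exact mul_le_mul_of_nonneg_left h3 ha'

lemma aux_pi (d : ℕ) (i₀ : Fin d) (R : ℝ) (hR : 0 ≤ R) (h : ℝ → ℝ) (hh : Continuous h) :
    ∫ x in Set.pi Set.univ (fun _ : Fin d => Set.Icc (-R) R),
        h (x i₀) ∂(volume : Measure (∀ _ : Fin d, ℝ))
      = (2*R)^(d-1) * ∫ s in Set.Icc (-R) R, h s := by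
  have hmeas : MeasurableSet (Set.pi Set.univ (fun _ : Fin d => Set.Icc (-R) R)) :=
    MeasurableSet.univ_pi (fun _ => measurableSet_Icc)
  rw [← MeasureTheory.integral_indicator hmeas]
  have hind : Set.indicator (Set.pi Set.univ (fun _ : Fin d => Set.Icc (-R) R))
      (fun x => h (x i₀))
      = fun x => ∏ i : Fin d,
          Set.indicator (Set.Icc (-R) R) (fun z => if i = i₀ then h z else 1) (x i) := by
    funext x
    by_cases hx : ∀ i, x i ∈ Set.Icc (-R) R
    · rw [Set.indicator_of_mem (by exact fun i _ => hx i)]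
      have : ∀ i : Fin d, Set.indicator (Set.Icc (-R) R)
          (fun z => if i = i₀ then h z else 1) (x i) = if i = i₀ then h (x i) else 1 :=
        fun i => Set.indicator_of_mem (hx i) _
      simp_rw [this]
      rw [Finset.prod_ite_eq' Finset.univ i₀ (fun i => h (x i))]
      simp
    · push_neg at hx
      obtain ⟨j, hj⟩ := hx
      rw [Set.indicator_of_notMem (by intro hmem; exact hj (hmem j (Set.mem_univ j)))]
      rw [eq_comm]
      apply Finset.prod_eq_zero (Finset.mem_univ j)
      exact Set.indicator_of_notMem hj _
  rw [hind, MeasureTheory.volume_pi, MeasureTheory.integral_fintype_prod_eq_prod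
    (f := fun i y => Set.indicator (Set.Icc (-R) R) (fun z => if i = i₀ then h z else 1) y)]
  rw [← Finset.mul_prod_erase Finset.univ _ (Finset.mem_univ i₀)]
  have hA : (∫ y : ℝ, Set.indicator (Set.Icc (-R) R)
      (fun z => if i₀ = i₀ then h z else 1) y) = ∫ s in Set.Icc (-R) R, h s := by
    rw [MeasureTheory.integral_indicator measurableSet_Icc]; simp
  have hB : ∀ i ∈ Finset.univ.erase i₀, (∫ y : ℝ, Set.indicator (Set.Icc (-R) R)
      (fun z => if i = i₀ then h z else 1) y) = 2 * R := by
    intro i hi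
    have hne : i ≠ i₀ := Finset.ne_of_mem_erase hi
    rw [MeasureTheory.integral_indicator measurableSet_Icc]
    simp only [if_neg hne]
    rw [setIntegral_const, MeasureTheory.measureReal_def, Real.volume_Icc, smul_eq_mul, mul_one,
      ENNReal.toReal_ofReal (by linarith)]
    ring
  rw [hA, Finset.prod_congr rfl hB, Finset.prod_const,
    Finset.card_erase_of_mem (Finset.mem_univ i₀), Finset.card_univ, Fintype.card_fin]
  ring

lemma aux_lip (K : ℝ) (hK : 0 < K) (m : ℝ → ℝ)
    (hm : ContDiffOn ℝ 1 m (Set.Ici 0)) (hm0 : m 0 = 0) :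
    ∃ M : ℝ, 0 ≤ M ∧ ∀ x ∈ Set.Icc (0:ℝ) K, m x ≤ M * x := by
  have hcont : ContinuousOn (derivWithin m (Set.Ici 0)) (Set.Ici (0:ℝ)) :=
    hm.continuousOn_derivWithin (uniqueDiffOn_Ici 0) le_rfl
  obtain ⟨M₀, hM₀⟩ := (isCompact_Icc (a := (0:ℝ)) (b := K)).exists_bound_of_continuousOn
    (hcont.mono Set.Icc_subset_Ici_self)
  refine ⟨max M₀ 0, le_max_right _ _, fun x hx => ?_⟩
  have hder : ∀ y ∈ Set.Icc (0:ℝ) K,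
      HasDerivWithinAt m (derivWithin m (Set.Ici 0) y) (Set.Icc (0:ℝ) K) y := by
    intro y hy
    exact ((hm.differentiableOn one_ne_zero y (Set.Icc_subset_Ici_self hy)).hasDerivWithinAt).mono
      Set.Icc_subset_Ici_self
  have hbound : ∀ y ∈ Set.Icc (0:ℝ) K, ‖derivWithin m (Set.Ici 0) y‖ ≤ max M₀ 0 :=
    fun y hy => le_trans (hM₀ y hy) (le_max_left _ _)
  have := (convex_Icc (0:ℝ) K).norm_image_sub_le_of_norm_hasDerivWithin_le hder hbound
    (Set.left_mem_Icc.mpr hK.le) hx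
  rw [hm0, sub_zero, sub_zero, Real.norm_eq_abs, Real.norm_eq_abs,
    abs_of_nonneg hx.1] at this
  exact le_trans (le_abs_self _) this





set_option maxHeartbeats 2000000 in
/-- Degree one linear vertex estimate with a vanishing multiplier `m(0) = 0`:
`∫_{|ξ| ≤ K/ε} m(ε|ξ̃|) dξ / |γ + ξ̃·ξ + i/t| ≲ ε^{2-d} (1 + |log ε|)`. -/
theorem stmt9 (d : ℕ) (hd : 1 ≤ d) (K : ℝ) (hK : 0 < K) (m : ℝ → ℝ)
    (hm : ContDiffOn ℝ 1 m (Set.Ici 0)) (hm0 : m 0 = 0)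
    (hmnonneg : ∀ x : ℝ, 0 ≤ x → 0 ≤ m x) :
    ∃ C : ℝ, ∀ (ε t γ : ℝ) (ξT : EuclideanSpace ℝ (Fin d)),
      0 < ε → ε ≤ 1 / 2 → 0 < t → t ≤ 1 → ‖ξT‖ ≤ K / ε →
      (∫ ξ in Metric.closedBall (0 : EuclideanSpace ℝ (Fin d)) (K / ε),
          m (ε * ‖ξT‖) / ‖(γ : ℂ) + ((inner ℝ ξT ξ : ℝ) : ℂ) + Complex.I / (t : ℂ)‖)
        ≤ C * ε ^ ((2 : ℝ) - d) * (1 + |Real.log ε|) := by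
  haveI : NeZero d := ⟨by omega⟩
  obtain ⟨M, hM0, hMle⟩ := aux_lip K hK m hm hm0
  set C₂ : ℝ := max (Real.log (1 + 2*K^2)) 2 with hC₂
  have hC₂0 : (0:ℝ) ≤ C₂ := le_trans (by norm_num) (le_max_right _ _)
  refine ⟨M * (2*K)^(d-1) * 4 * C₂, ?_⟩
  intro ε t γ ξT hε hε2 ht ht1 hξT
  have hεlt1 : ε < 1 := by linarith
  set R : ℝ := K / ε with hRdef
  have hR0 : 0 < R := div_pos hK hε
  have hrhs0 : 0 ≤ M * (2*K)^(d-1) * 4 * C₂ * ε ^ ((2:ℝ) - d) * (1 + |Real.log ε|) := by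
    have h1 : (0:ℝ) ≤ ε ^ ((2:ℝ) - d) := Real.rpow_nonneg hε.le _
    have h2 : (0:ℝ) ≤ (2*K)^(d-1) := by positivity
    have h3 : (0:ℝ) ≤ 1 + |Real.log ε| := by positivity
    positivity
  by_cases hzero : ξT = 0
  · subst hzero
    simp only [norm_zero, mul_zero, hm0, zero_div, MeasureTheory.integral_zero]
    exact hrhs0
  -- nonzero case
  set a : ℝ := ‖ξT‖ with hadef
  have ha0 : 0 < a := norm_pos_iff.mpr hzero
  have haR : a ≤ R := hξT
  set B := Metric.closedBall (0 : EuclideanSpace ℝ (Fin d)) R with hBdef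
  have hBcompact : IsCompact B := isCompact_closedBall _ _
  have hBmeas : MeasurableSet B := measurableSet_closedBall
  -- continuity facts
  have hinner : Continuous fun ξ : EuclideanSpace ℝ (Fin d) => (inner ℝ ξT ξ : ℝ) :=
    continuous_const.inner continuous_id
  set G : EuclideanSpace ℝ (Fin d) → ℝ :=
    fun ξ => (max t⁻¹ |γ + (inner ℝ ξT ξ : ℝ)|)⁻¹ with hGdef
  have hGcont : Continuous G := by
    apply (continuous_const.max (continuous_abs.comp (continuous_const.add hinner))).inv₀
    intro x
    exact ne_of_gt (lt_of_lt_of_le (by positivity) (le_max_left _ _))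
  have hGnonneg : ∀ ξ, 0 ≤ G ξ := fun ξ => by
    apply inv_nonneg.mpr; positivity
  -- lower bound on the complex modulus
  have habs : ∀ ξ : EuclideanSpace ℝ (Fin d),
      max t⁻¹ |γ + (inner ℝ ξT ξ : ℝ)|
        ≤ ‖(γ : ℂ) + ((inner ℝ ξT ξ : ℝ) : ℂ) + Complex.I / (t : ℂ)‖ := by
    intro ξ
    set r : ℝ := (inner ℝ ξT ξ : ℝ)
    have hI : Complex.I / (t : ℂ) = ((t⁻¹ : ℝ) : ℂ) * Complex.I := by
      rw [div_eq_mul_inv, ← Complex.ofReal_inv, mul_comm]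
    have hre : ((γ : ℂ) + (r : ℂ) + Complex.I / (t : ℂ)).re = γ + r := by rw [hI]; simp
    have him : ((γ : ℂ) + (r : ℂ) + Complex.I / (t : ℂ)).im = t⁻¹ := by rw [hI]; simp
    apply max_le
    · calc t⁻¹ = |((γ : ℂ) + (r : ℂ) + Complex.I / (t : ℂ)).im| := by
            rw [him, abs_of_pos (by positivity)]
        _ ≤ _ := Complex.abs_im_le_norm _
    · calc |γ + r| = |((γ : ℂ) + (r : ℂ) + Complex.I / (t : ℂ)).re| := by rw [hre]
        _ ≤ _ := Complex.abs_re_le_norm _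
  have habspos : ∀ ξ : EuclideanSpace ℝ (Fin d),
      0 < ‖(γ : ℂ) + ((inner ℝ ξT ξ : ℝ) : ℂ) + Complex.I / (t : ℂ)‖ :=
    fun ξ => lt_of_lt_of_le (lt_of_lt_of_le (by positivity) (le_max_left _ _)) (habs ξ)
  have hfcont : Continuous fun ξ : EuclideanSpace ℝ (Fin d) =>
      m (ε * a) / ‖(γ : ℂ) + ((inner ℝ ξT ξ : ℝ) : ℂ) + Complex.I / (t : ℂ)‖ := by
    apply continuous_const.div
    · exact continuous_norm.comp
        ((continuous_const.add (Complex.continuous_ofReal.comp hinner)).add continuous_const)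
    · exact fun ξ => ne_of_gt (habspos ξ)
  have hma : 0 ≤ m (ε * a) := hmnonneg _ (by positivity)
  -- step 1 : bound by the constant times G
  have step1 : (∫ ξ in B,
      m (ε * a) / ‖(γ : ℂ) + ((inner ℝ ξT ξ : ℝ) : ℂ) + Complex.I / (t : ℂ)‖)
      ≤ m (ε * a) * ∫ ξ in B, G ξ := by
    rw [← MeasureTheory.integral_const_mul]
    apply setIntegral_mono_on
    · exact hfcont.continuousOn.integrableOn_compact hBcompact
    · exact (continuous_const.mul hGcont).continuousOn.integrableOn_compact hBcompact
    · exact hBmeas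
    · intro ξ _
      rw [div_eq_mul_inv]
      apply mul_le_mul_of_nonneg_left _ hma
      exact inv_anti₀ (lt_of_lt_of_le (by positivity) (le_max_left _ _)) (habs ξ)
  -- step 2 : rotation
  obtain ⟨T, hTIP, hTmp⟩ : ∃ T : EuclideanSpace ℝ (Fin d) ≃ₗᵢ[ℝ] EuclideanSpace ℝ (Fin d),
      (∀ ξ, (inner ℝ ξT (T ξ) : ℝ) = a * ξ 0) ∧ MeasurePreserving T := by
    set e : EuclideanSpace ℝ (Fin d) := a⁻¹ • ξT with he
    have hnorme : ‖e‖ = 1 := norm_smul_inv_norm hzero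
    set e₀ : EuclideanSpace ℝ (Fin d) := EuclideanSpace.single (0 : Fin d) (1:ℝ) with he₀
    set T := Submodule.reflection (ℝ ∙ (e₀ - e))ᗮ with hT
    have hTe₀ : T e₀ = e := Submodule.reflection_sub (by rw [EuclideanSpace.norm_single, hnorme]; simp)
    refine ⟨T, fun ξ => ?_, T.measurePreserving⟩
    have h1 : ξT = a • e := by rw [he, smul_smul, mul_inv_cancel₀ (ne_of_gt ha0), one_smul]
    rw [h1, real_inner_smul_left, ← hTe₀, LinearIsometryEquiv.inner_map_map,
      EuclideanSpace.inner_single_left]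
    simp
  set h₁ : ℝ → ℝ := fun s => (max t⁻¹ |γ + a * s|)⁻¹ with hh₁def
  have hh₁cont : Continuous h₁ := by
    apply (continuous_const.max (continuous_abs.comp
      (continuous_const.add (continuous_const.mul continuous_id)))).inv₀
    intro x
    exact ne_of_gt (lt_of_lt_of_le (by positivity) (le_max_left _ _))
  have hh₁nonneg : ∀ s, 0 ≤ h₁ s := fun s => by apply inv_nonneg.mpr; positivity
  have step2 : (∫ ξ in B, G ξ) = ∫ ξ in B, h₁ (ξ 0) := by
    have hpre : T ⁻¹' B = B := by
      ext x
      simp only [Set.mem_preimage, hBdef, Metric.mem_closedBall, dist_zero_right]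
      rw [T.norm_map]
    have := hTmp.setIntegral_preimage_emb T.toMeasurableEquiv.measurableEmbedding G B
    rw [hpre] at this
    rw [← this]
    congr 1
    funext ξ
    show (max t⁻¹ |γ + (inner ℝ ξT (T ξ) : ℝ)|)⁻¹ = h₁ (ξ 0)
    rw [hTIP ξ]
  -- step 3 : to the pi space and the box
  set box : Set (∀ _ : Fin d, ℝ) := Set.pi Set.univ (fun _ => Set.Icc (-R) R) with hboxdef
  have step3 : (∫ ξ in B, h₁ (ξ 0)) ≤ ∫ x in box, h₁ (x 0) := by
    set ψ := MeasurableEquiv.toLp 2 (Fin d → ℝ) with hψ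
    have hmp : MeasurePreserving ψ :=
      (EuclideanSpace.volume_preserving_symm_measurableEquiv_toLp (Fin d)).symm
    have heq := hmp.setIntegral_preimage_emb
      (MeasurableEquiv.measurableEmbedding _) (fun ξ => h₁ (ξ 0)) B
    have happly : ∀ x : ∀ _ : Fin d, ℝ, (ψ x : EuclideanSpace ℝ (Fin d)) 0 = x 0 := fun _ => rfl
    rw [← heq]
    have hsub : ψ ⁻¹' B ⊆ box := by
      intro x hx
      simp only [Set.mem_preimage, hBdef, Metric.mem_closedBall, dist_zero_right] at hx
      intro i _
      have hco : |x i| ≤ ‖(ψ x : EuclideanSpace ℝ (Fin d))‖ := by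
        rw [EuclideanSpace.norm_eq,
          Real.le_sqrt (abs_nonneg _) (Finset.sum_nonneg fun _ _ => sq_nonneg _)]
        have := Finset.single_le_sum
          (f := fun j => ‖(ψ x : EuclideanSpace ℝ (Fin d)) j‖ ^ 2)
          (fun j _ => sq_nonneg _) (Finset.mem_univ i)
        simpa [Real.norm_eq_abs, hψ, MeasurableEquiv.coe_toLp] using this
      have : |x i| ≤ R := le_trans hco hx
      exact abs_le.mp this |> fun ⟨h1, h2⟩ => ⟨h1, h2⟩
    apply setIntegral_mono_set
    · exact ((hh₁cont.comp (continuous_apply (0 : Fin d))).continuousOn).integrableOn_compact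
        (isCompact_univ_pi fun _ => isCompact_Icc)
    · exact Filter.Eventually.of_forall (fun x => hh₁nonneg _)
    · exact HasSubset.Subset.eventuallyLE hsub
  have step4 : (∫ x in box, h₁ (x 0)) = (2*R)^(d-1) * ∫ s in Set.Icc (-R) R, h₁ s :=
    aux_pi d 0 R hR0.le h₁ hh₁cont
  have step5 : (∫ s in Set.Icc (-R) R, h₁ s)
      ≤ a⁻¹ * (4 * Real.log (1 + 2 * a * R / t⁻¹)) :=
    aux_subst t⁻¹ a γ R (by positivity) ha0 hR0.le
  -- step 6 : logarithm bound
  have step6 : Real.log (1 + 2 * a * R / t⁻¹) ≤ C₂ * (1 + |Real.log ε|) := by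
    have hdiv : 2 * a * R / t⁻¹ = 2 * a * R * t := by
      rw [div_inv_eq_mul]
    have h1 : 1 + 2 * a * R / t⁻¹ ≤ (1 + 2*K^2) / ε^2 := by
      rw [hdiv]
      have h' : a * t ≤ R := by
        have := mul_le_mul haR ht1 ht.le hR0.le
        simpa using this
      have haRt : 2 * a * R * t ≤ 2 * (K^2 / ε^2) := by
        calc 2 * a * R * t = 2 * R * (a * t) := by ring
          _ ≤ 2 * R * R := by nlinarith [hR0.le]
          _ = 2 * (K^2 / ε^2) := by rw [hRdef]; field_simp
      have hε2 : ε^2 ≤ 1 := by nlinarith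
      have h1le : (1:ℝ) ≤ 1 / ε^2 := by
        rw [le_div_iff₀ (by positivity)]; linarith
      have hsplit : (1 + 2*K^2) / ε^2 = 1 / ε^2 + 2 * (K^2 / ε^2) := by ring
      linarith
    have h2 : Real.log ((1 + 2*K^2) / ε^2)
        = Real.log (1 + 2*K^2) + 2 * |Real.log ε| := by
      rw [Real.log_div (by positivity) (by positivity), Real.log_pow,
        abs_of_neg (Real.log_neg hε hεlt1)]
      push_cast; ring
    have h3 : Real.log (1 + 2 * a * R / t⁻¹) ≤ Real.log ((1 + 2*K^2) / ε^2) := by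
      apply Real.log_le_log _ h1
      have : (0:ℝ) ≤ 2 * a * R / t⁻¹ := by positivity
      linarith
    have h4 : Real.log (1 + 2*K^2) ≤ C₂ := le_max_left _ _
    have h5 : (2:ℝ) ≤ C₂ := le_max_right _ _
    have h6 : 0 ≤ |Real.log ε| := abs_nonneg _
    calc Real.log (1 + 2 * a * R / t⁻¹) ≤ Real.log (1 + 2*K^2) + 2 * |Real.log ε| := by
          rw [← h2]; exact h3
      _ ≤ C₂ + C₂ * |Real.log ε| := by
            have := mul_le_mul_of_nonneg_right h5 h6
            linarith
      _ = C₂ * (1 + |Real.log ε|) := by ring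
  -- combine
  have hJ0 : 0 ≤ ∫ s in Set.Icc (-R) R, h₁ s :=
    setIntegral_nonneg measurableSet_Icc (fun s _ => hh₁nonneg s)
  have hcle : m (ε * a) ≤ M * (ε * a) := by
    apply hMle
    refine Set.mem_Icc.mpr ⟨by positivity, ?_⟩
    calc ε * a ≤ ε * R := mul_le_mul_of_nonneg_left haR hε.le
      _ = K := by rw [hRdef]; field_simp
  have hGint_le : (∫ ξ in B, G ξ)
      ≤ (2*R)^(d-1) * (a⁻¹ * (4 * (C₂ * (1 + |Real.log ε|)))) := by
    rw [step2]
    refine le_trans step3 ?_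
    rw [step4]
    apply mul_le_mul_of_nonneg_left _ (by positivity)
    refine le_trans step5 ?_
    apply mul_le_mul_of_nonneg_left _ (by positivity)
    have h6 : 0 ≤ Real.log (1 + 2 * a * R / t⁻¹) := by
      apply Real.log_nonneg
      have : (0:ℝ) ≤ 2 * a * R / t⁻¹ := by positivity
      linarith
    linarith [step6]
  have hGint0 : 0 ≤ ∫ ξ in B, G ξ := setIntegral_nonneg hBmeas (fun ξ _ => hGnonneg ξ)
  have hfinal : (∫ ξ in B,
      m (ε * a) / ‖(γ : ℂ) + ((inner ℝ ξT ξ : ℝ) : ℂ) + Complex.I / (t : ℂ)‖)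
      ≤ (M * (ε * a)) * ((2*R)^(d-1) * (a⁻¹ * (4 * (C₂ * (1 + |Real.log ε|))))) := by
    refine le_trans step1 ?_
    apply mul_le_mul hcle hGint_le hGint0 (by positivity)
  refine le_trans hfinal (le_of_eq ?_)
  have hcast : ((2:ℝ) - (d:ℝ)) = 1 + (-(((d-1:ℕ)):ℝ)) := by
    push_cast [Nat.cast_sub hd]; ring
  have hrpow : ε ^ ((2:ℝ) - d) = ε * (ε^(d-1))⁻¹ := by
    rw [hcast, Real.rpow_add hε, Real.rpow_one, Real.rpow_neg hε.le, Real.rpow_natCast]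
  have h2R : (2*R)^(d-1) = (2*K)^(d-1) * (ε^(d-1))⁻¹ := by
    have : 2*R = (2*K) / ε := by rw [hRdef]; ring
    rw [this, div_pow, div_eq_mul_inv]
  have hstep : (M * (ε * a)) * ((2*R)^(d-1) * (a⁻¹ * (4 * (C₂ * (1 + |Real.log ε|)))))
      = (M * 4 * C₂ * (1 + |Real.log ε|)) * (ε * (2*R)^(d-1)) * (a * a⁻¹) := by ring
  rw [hstep, mul_inv_cancel₀ (ne_of_gt ha0), mul_one, h2R, hrpow]
  ring
end
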